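/- The matrix 𝒮 with entries 𝒮_{j₁,j₂} = √(2/(k+2)) · sin(π(2j₁+1)(2j₂+1)/(k+2)), where j₁, j₂ range over {0, 1/2, 1, …, k/2}, is real symmetric and satisfies 𝒮² = I; in particular 𝒮 is unitary. -/

import Mathlib

open Real Finset

lemma cos_sum_eq (n : ℕ) (hn : 0 < n) (c : ℤ) (hc : ¬ ((2 * n : ℤ) ∣ c)) :
    ∑ m ∈ Finset.range n, Real.cos (Real.pi * c * m / n) = if Odd c then 1 else 0 := by
  have hn' : (n : ℝ) ≠ 0 := Nat.cast_ne_zero.mpr hn.ne'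
  have hnc : (n : ℂ) ≠ 0 := Nat.cast_ne_zero.mpr hn.ne'
  set θ : ℝ := Real.pi * c / n with hθ
  set z : ℂ := Complex.exp (θ * Complex.I) with hz
  have hzne : z ≠ 1 := by
    intro h
    rw [hz, Complex.exp_eq_one_iff] at h
    obtain ⟨j, hj⟩ := h
    have hθj : θ = j * (2 * Real.pi) := by simpa using congrArg Complex.im hj
    apply hc
    refine ⟨j, ?_⟩
    rw [hθ] at hθj
    field_simp at hθj
    have h2 : Real.pi * (c : ℝ) = Real.pi * (2 * n * j) := by rw [hθj]; ring
    have h3 := mul_left_cancel₀ Real.pi_ne_zero h2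
    exact_mod_cast h3
  have hre : ∀ m : ℕ, Real.cos (Real.pi * c * m / n) = (z ^ m).re := by
    intro m
    have h1 : Real.pi * c * m / n = m * θ := by rw [hθ]; ring
    rw [h1, hz, ← Complex.exp_nat_mul]
    rw [show ((m : ℂ) * (θ * Complex.I)) = ((m * θ : ℝ) : ℂ) * Complex.I by push_cast; ring]
    rw [Complex.exp_ofReal_mul_I_re]
  simp_rw [hre]
  rw [← Complex.re_sum, geom_sum_eq hzne]
  have hzn : z ^ n = (-1 : ℂ) ^ c := by
    rw [hz, ← Complex.exp_nat_mul]
    rw [show ((n : ℂ) * (θ * Complex.I)) = c * (Real.pi * Complex.I) by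
      rw [hθ]; push_cast; field_simp]
    rw [Complex.exp_int_mul, Complex.exp_pi_mul_I]
  rcases Int.even_or_odd c with he | ho
  · rw [hzn, he.neg_one_zpow]
    simp [Int.not_odd_iff_even.mpr he]
  · rw [hzn, ho.neg_one_zpow, if_pos ho]
    have hrez : z.re = Real.cos θ := by rw [hz, Complex.exp_ofReal_mul_I_re]
    have himz : z.im = Real.sin θ := by rw [hz, Complex.exp_ofReal_mul_I_im]
    have hnsq : Complex.normSq (z - 1) = 2 - 2 * Real.cos θ := by
      rw [Complex.normSq_apply]
      simp [hrez, himz]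
      nlinarith [Real.sin_sq_add_cos_sq θ]
    have hcosne : Real.cos θ ≠ 1 := by
      intro h
      apply hzne
      have hs : Real.sin θ = 0 := by nlinarith [Real.sin_sq_add_cos_sq θ]
      apply Complex.ext <;> simp [hrez, himz, h, hs]
    have hd : (2 : ℝ) - 2 * Real.cos θ ≠ 0 := by
      intro h; exact hcosne (by linarith)
    rw [show (-1 - 1 : ℂ) = -2 by ring, Complex.div_re, hnsq]
    simp [Complex.sub_re, Complex.sub_im, hrez, himz]
    field_simp
    ring

lemma sin_orth (n : ℕ) (hn : 0 < n) (a b : ℕ) (ha0 : 0 < a) (ha : a < n)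
    (hb0 : 0 < b) (hb : b < n) :
    ∑ m ∈ Finset.range n, Real.sin (Real.pi * a * m / n) * Real.sin (Real.pi * b * m / n)
      = if a = b then (n : ℝ) / 2 else 0 := by
  have hn' : (n : ℝ) ≠ 0 := Nat.cast_ne_zero.mpr hn.ne'
  set c₁ : ℤ := (a : ℤ) - b with hc₁
  set c₂ : ℤ := (a : ℤ) + b with hc₂
  have key : ∀ m : ℕ, Real.sin (Real.pi * a * m / n) * Real.sin (Real.pi * b * m / n)
      = (Real.cos (Real.pi * (c₁ : ℝ) * m / n) - Real.cos (Real.pi * (c₂ : ℝ) * m / n)) / 2 := by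
    intro m
    have h1 : (Real.pi * (c₁ : ℝ) * m / n : ℝ)
        = Real.pi * a * m / n - Real.pi * b * m / n := by rw [hc₁]; push_cast; ring
    have h2 : (Real.pi * (c₂ : ℝ) * m / n : ℝ)
        = Real.pi * a * m / n + Real.pi * b * m / n := by rw [hc₂]; push_cast; ring
    rw [h1, h2, Real.cos_sub, Real.cos_add]
    ring
  simp_rw [key]
  rw [← Finset.sum_div, Finset.sum_sub_distrib]
  have hsum : ∑ m ∈ Finset.range n, Real.cos (Real.pi * (c₂ : ℝ) * m / n) = if Odd c₂ then 1 else 0 := by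
    apply cos_sum_eq n hn c₂
    rintro ⟨j, hj⟩
    have h1 : (0 : ℤ) < c₂ := by rw [hc₂]; positivity
    have h2 : c₂ < 2 * n := by omega
    rw [hj] at h1 h2
    rcases le_or_gt j 0 with h | h
    · nlinarith
    · nlinarith
  by_cases hab : a = b
  · subst hab
    have hc10 : c₁ = 0 := by omega
    have hdiff : ∑ m ∈ Finset.range n, Real.cos (Real.pi * (c₁ : ℝ) * m / n) = n := by
      simp [hc10]
    rw [hdiff, hsum, if_pos rfl]
    have : ¬ Odd c₂ := by rw [Int.not_odd_iff_even]; exact ⟨a, by omega⟩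
    rw [if_neg this]
    ring
  · rw [if_neg hab, hsum]
    have hdiff : ∑ m ∈ Finset.range n, Real.cos (Real.pi * (c₁ : ℝ) * m / n) = if Odd c₁ then 1 else 0 := by
      apply cos_sum_eq n hn c₁
      rintro ⟨j, hj⟩
      have hne : c₁ ≠ 0 := by
        rw [hc₁]; intro h; exact hab (by omega)
      have h2 : |c₁| < 2 * n := by
        rw [abs_lt]; omega
      rw [hj] at hne h2
      rcases lt_trichotomy j 0 with h | h | h
      · rw [abs_of_neg (by nlinarith)] at h2; nlinarith
      · simp [h] at hne
      · rw [abs_of_pos (by nlinarith)] at h2; nlinarith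
    rw [hdiff]
    have hpar : Odd c₁ ↔ Odd c₂ := by
      constructor <;> rintro ⟨j, hj⟩
      · exact ⟨j + b, by omega⟩
      · exact ⟨j - b, by omega⟩
    by_cases hodd : Odd c₁
    · rw [if_pos hodd, if_pos (hpar.mp hodd)]; ring
    · rw [if_neg hodd, if_neg (fun h => hodd (hpar.mpr h))]; ring

/-- The `SU(2)_k` modular S-matrix
`𝒮_{ℓ₁,ℓ₂} = √(2/(k+2))·sin(π(ℓ₁+1)(ℓ₂+1)/(k+2))` (with `ℓ = 2j`, `ℓ = 0,…,k`)
is symmetric and an involution, hence (being real) unitary. -/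
theorem SU2k_S_involution (k : ℕ) (hk : 0 < k) :
    let 𝒮 : Matrix (Fin (k + 1)) (Fin (k + 1)) ℝ := fun ℓ₁ ℓ₂ =>
      Real.sqrt (2 / (k + 2)) *
        Real.sin (Real.pi * ((ℓ₁ : ℕ) + 1) * ((ℓ₂ : ℕ) + 1) / (k + 2))
    𝒮.transpose = 𝒮 ∧ 𝒮 * 𝒮 = 1 ∧ 𝒮.transpose * 𝒮 = 1 := by
  intro 𝒮
  have hn2 : (0:ℝ) < (k : ℝ) + 2 := by positivity
  have hsym : 𝒮.transpose = 𝒮 := by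
    ext i j
    simp only [Matrix.transpose_apply]; simp only [𝒮]
    ring_nf
  have hmul : 𝒮 * 𝒮 = 1 := by
    ext i j
    rw [Matrix.mul_apply]
    have hentry : ∀ ℓ : Fin (k+1), 𝒮 i ℓ * 𝒮 ℓ j =
        (2 / ((k:ℝ) + 2)) * (Real.sin (Real.pi * ((i:ℕ)+1) * ((ℓ:ℕ)+1) / ((k:ℝ)+2)) *
          Real.sin (Real.pi * ((j:ℕ)+1) * ((ℓ:ℕ)+1) / ((k:ℝ)+2))) := by
      intro ℓ
      simp only [𝒮]
      rw [show Real.pi * ((ℓ:ℕ)+1) * ((j:ℕ)+1) / ((k:ℝ)+2)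
            = Real.pi * ((j:ℕ)+1) * ((ℓ:ℕ)+1) / ((k:ℝ)+2) by ring]
      rw [show Real.sqrt (2 / ((k:ℝ) + 2)) * Real.sin (Real.pi * ((i:ℕ)+1) * ((ℓ:ℕ)+1) / ((k:ℝ)+2)) *
            (Real.sqrt (2 / ((k:ℝ) + 2)) * Real.sin (Real.pi * ((j:ℕ)+1) * ((ℓ:ℕ)+1) / ((k:ℝ)+2)))
          = (Real.sqrt (2 / ((k:ℝ)+2)) * Real.sqrt (2 / ((k:ℝ)+2))) *
            (Real.sin (Real.pi * ((i:ℕ)+1) * ((ℓ:ℕ)+1) / ((k:ℝ)+2)) *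
              Real.sin (Real.pi * ((j:ℕ)+1) * ((ℓ:ℕ)+1) / ((k:ℝ)+2))) by ring]
      rw [Real.mul_self_sqrt (by positivity)]
    simp_rw [hentry]
    rw [← Finset.mul_sum]
    have hfin : ∑ ℓ : Fin (k+1), (Real.sin (Real.pi * ((i:ℕ)+1) * ((ℓ:ℕ)+1) / ((k:ℝ)+2)) *
          Real.sin (Real.pi * ((j:ℕ)+1) * ((ℓ:ℕ)+1) / ((k:ℝ)+2)))
        = ∑ m ∈ Finset.range (k+2), Real.sin (Real.pi * ((i:ℕ)+1) * m / ((k:ℝ)+2)) *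
            Real.sin (Real.pi * ((j:ℕ)+1) * m / ((k:ℝ)+2)) := by
      rw [Finset.sum_range_succ' _ (k+1),
        Fin.sum_univ_eq_sum_range (fun m => Real.sin (Real.pi * ((i:ℕ)+1) * ((m:ℝ)+1) / ((k:ℝ)+2)) *
          Real.sin (Real.pi * ((j:ℕ)+1) * ((m:ℝ)+1) / ((k:ℝ)+2))) (k+1)]
      push_cast
      norm_num
    rw [hfin]
    have horth := sin_orth (k+2) (by omega) ((i:ℕ)+1) ((j:ℕ)+1) (by omega) (by omega)
      (by omega) (by omega)
    push_cast at horth ⊢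
    rw [horth]
    by_cases hij : i = j
    · subst hij
      rw [Matrix.one_apply_eq]
      field_simp
      rw [if_pos trivial]; ring
    · rw [if_neg (fun h => hij (by omega))]
      rw [Matrix.one_apply_ne hij]; ring
  exact ⟨hsym, hmul, by rw [hsym, hmul]⟩
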